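/- In the double extension construction, with A_T defined by A_T(βf + Y + ρe) = β v(T) − ⟨v(T), Y⟩₀ e for T = αf + X + ηe and v(T) = (Qᵀ + P)X, one has ⟨[T, T'] + A_T(T'), T⟩ = 0 for all T, T' ∈ 𝔫. Consequently (𝔫, ⟨·,·⟩) satisfies the GO condition with k = 0 and with a geodesic graph T ↦ A_T that is linear in T. -/

import Mathlib

open Matrix

/-- The block matrix `P = [[0, -Sᵀ],[S, Sᵀ - S]]`. -/
def Pmat {s : ℕ} (S : Matrix (Fin s) (Fin s) ℝ) :
    Matrix (Fin s ⊕ Fin s) (Fin s ⊕ Fin s) ℝ :=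
  Matrix.fromBlocks 0 (-Sᵀ) S (Sᵀ - S)

/-- The block matrix `Q = [[0, Sᵀ],[S, Sᵀ - S]]`. -/
def Qmat {s : ℕ} (S : Matrix (Fin s) (Fin s) ℝ) :
    Matrix (Fin s ⊕ Fin s) (Fin s ⊕ Fin s) ℝ :=
  Matrix.fromBlocks 0 Sᵀ S (Sᵀ - S)

/-- The underlying vector space `𝔫 = ℝf ⊕ ℝ^{2s} ⊕ ℝe`; the element `(α, X, η)` represents
`αf + X + ηe`. -/
abbrev DE (s : ℕ) : Type := ℝ × ((Fin s ⊕ Fin s) → ℝ) × ℝ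

/-- The Lie bracket `[αf + X + ηe, βf + Y + ρe] = αQY − βQX + ⟨PX, Y⟩₀ e` of the double
extension construction. -/
def bkDE {s : ℕ} (S : Matrix (Fin s) (Fin s) ℝ) (a b : DE s) : DE s :=
  (0, a.1 • (Qmat S).mulVec b.2.1 - b.1 • (Qmat S).mulVec a.2.1,
    (Pmat S).mulVec a.2.1 ⬝ᵥ b.2.1)

/-- The inner product `⟨αf + X + ηe, βf + Y + ρe⟩ = ⟨X,Y⟩₀ + αρ + βη` of the double extension
construction. -/
def formDE {s : ℕ} (a b : DE s) : ℝ :=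
  a.2.1 ⬝ᵥ b.2.1 + a.1 * b.2.2 + b.1 * a.2.2

/-- `D` is a skew-symmetric derivation of the double extension `(𝔫, ⟨·,·⟩)`: a linear map that
is a derivation of the bracket and skew-symmetric with respect to the form. -/
def IsSkewDerivDE {s : ℕ} (S : Matrix (Fin s) (Fin s) ℝ) (D : DE s → DE s) : Prop :=
  IsLinearMap ℝ D ∧
  (∀ a b : DE s, D (bkDE S a b) = bkDE S (D a) b + bkDE S a (D b)) ∧
  (∀ a b : DE s, formDE (D a) b + formDE a (D b) = 0)

/-- `v(T) = (Qᵀ + P) X` for `T = αf + X + ηe`. -/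
def vDE {s : ℕ} (S : Matrix (Fin s) (Fin s) ℝ) (T : DE s) : (Fin s ⊕ Fin s) → ℝ :=
  ((Qmat S)ᵀ + Pmat S).mulVec T.2.1

/-- The geodesic graph of the double extension construction:
`A_T (βf + Y + ρe) = β v(T) − ⟨v(T), Y⟩₀ e`. -/
def ATDE {s : ℕ} (S : Matrix (Fin s) (Fin s) ℝ) (T : DE s) : DE s → DE s :=
  fun b => (0, b.1 • vDE S T, -(vDE S T ⬝ᵥ b.2.1))


section helpers
variable {s : ℕ} (S : Matrix (Fin s) (Fin s) ℝ)

lemma adjDot {n : Type*} [Fintype n] (A : Matrix n n ℝ) (x y : n → ℝ) :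
    Aᵀ.mulVec x ⬝ᵥ y = x ⬝ᵥ A.mulVec y := by
  rw [Matrix.dotProduct_mulVec, ← Matrix.mulVec_transpose]

lemma PmatT : (Pmat S)ᵀ = -(Pmat S) := by
  ext i j
  rcases i with i | i <;> rcases j with j | j <;>
    simp [Pmat, Matrix.fromBlocks, Matrix.transpose_apply, Matrix.sub_apply]

lemma Pdot (x : (Fin s ⊕ Fin s) → ℝ) : (Pmat S).mulVec x ⬝ᵥ x = 0 := by
  have h1 : (Pmat S).mulVec x ⬝ᵥ x = x ⬝ᵥ (Pmat S).mulVec x := dotProduct_comm _ _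
  have h2 : (Pmat S)ᵀ.mulVec x ⬝ᵥ x = x ⬝ᵥ (Pmat S).mulVec x := adjDot _ _ _
  rw [PmatT] at h2
  simp [Matrix.neg_mulVec] at h2
  linarith

lemma Msq : ((Qmat S)ᵀ + Pmat S) * ((Qmat S)ᵀ + Pmat S) = 0 := by
  have hM : (Qmat S)ᵀ + Pmat S = Matrix.fromBlocks 0 0 (S + S) 0 := by
    ext i j
    rcases i with i | i <;> rcases j with j | j <;>
      simp [Pmat, Qmat, Matrix.fromBlocks, Matrix.transpose_apply, Matrix.sub_apply,
        Matrix.add_apply] <;> ring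
  rw [hM]
  simp [Matrix.fromBlocks_multiply]

lemma Mv (T : DE s) : ((Qmat S)ᵀ + Pmat S).mulVec (vDE S T) = 0 := by
  rw [vDE, Matrix.mulVec_mulVec, Msq, Matrix.zero_mulVec]

lemma Pv (T : DE s) : (Pmat S).mulVec (vDE S T) = -((Qmat S)ᵀ.mulVec (vDE S T)) := by
  have h := Mv S T
  rw [Matrix.add_mulVec] at h
  funext i
  have := congrFun h i
  simp [Pi.add_apply] at this ⊢
  linarith

end helpers

lemma part1 {s : ℕ} (S : Matrix (Fin s) (Fin s) ℝ) (T T' : DE s) :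
    formDE (bkDE S T T' + ATDE S T T') T = 0 := by
  obtain ⟨α, X, η⟩ := T
  obtain ⟨β, Y, ρ⟩ := T'
  have e1 : (Qmat S)ᵀ.mulVec X ⬝ᵥ Y = X ⬝ᵥ (Qmat S).mulVec Y := adjDot _ _ _
  have e2 : (Pmat S).mulVec X ⬝ᵥ X = 0 := Pdot S X
  have e3 : (Qmat S).mulVec Y ⬝ᵥ X = X ⬝ᵥ (Qmat S).mulVec Y := dotProduct_comm _ _
  have e4 : (Qmat S)ᵀ.mulVec X ⬝ᵥ X = (Qmat S).mulVec X ⬝ᵥ X := by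
    rw [adjDot, dotProduct_comm]
  simp only [formDE, bkDE, ATDE, vDE, Prod.fst_add, Prod.snd_add, Matrix.add_mulVec,
    dotProduct_add, add_dotProduct, sub_dotProduct,
    smul_dotProduct, dotProduct_smul, smul_eq_mul]
  linear_combination α*e3 - α*e1 + β*e4 + β*e2

lemma vlin {s : ℕ} (S : Matrix (Fin s) (Fin s) ℝ) : IsLinearMap ℝ (vDE S) := by
  constructor
  · intro T T'; simp [vDE, Matrix.mulVec_add]
  · intro c T; simp [vDE, Matrix.mulVec_smul]

lemma part2 {s : ℕ} (S : Matrix (Fin s) (Fin s) ℝ) :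
    IsLinearMap ℝ (fun T : DE s => ATDE S T) := by
  constructor
  · intro T T'
    funext b
    simp [ATDE, (vlin S).map_add, Prod.ext_iff, smul_add, dotProduct_add]
    ring
  · intro c T
    funext b
    simp [ATDE, (vlin S).map_smul, Prod.ext_iff, smul_comm b.1 c, dotProduct_smul]

lemma blin {s : ℕ} (S : Matrix (Fin s) (Fin s) ℝ) (T : DE s) :
    IsLinearMap ℝ (ATDE S T) := by
  constructor
  · intro a b
    simp [ATDE, Prod.ext_iff, add_smul, dotProduct_add]
    ring
  · intro c a
    simp [ATDE, Prod.ext_iff, smul_smul, dotProduct_smul]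

lemma skew {s : ℕ} (S : Matrix (Fin s) (Fin s) ℝ) (T a b : DE s) :
    formDE (ATDE S T a) b + formDE a (ATDE S T b) = 0 := by
  simp [formDE, ATDE, smul_dotProduct, dotProduct_smul, dotProduct_comm (vDE S T) a.2.1]

lemma derivAT {s : ℕ} (S : Matrix (Fin s) (Fin s) ℝ) (T a b : DE s) :
    ATDE S T (bkDE S a b) = bkDE S (ATDE S T a) b + bkDE S a (ATDE S T b) := by
  have hPv := Pv S T
  have e1 : ∀ x, vDE S T ⬝ᵥ (Qmat S).mulVec x = -((Pmat S).mulVec (vDE S T) ⬝ᵥ x) := by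
    intro x
    rw [hPv, ← adjDot]
    simp
  have e2 : ∀ x, (Pmat S).mulVec x ⬝ᵥ vDE S T = -((Pmat S).mulVec (vDE S T) ⬝ᵥ x) := by
    intro x
    rw [dotProduct_comm, ← adjDot (Pmat S), PmatT, Matrix.neg_mulVec, neg_dotProduct]
  simp only [ATDE, bkDE, Prod.ext_iff, Prod.fst_add, Prod.snd_add, Prod.mk_add_mk]
  refine ⟨by simp, ?_, ?_⟩
  · funext i
    simp [Matrix.mulVec_smul, smul_smul]
    ring
  · simp [dotProduct_sub, dotProduct_smul, smul_dotProduct, e1, e2, Matrix.mulVec_smul]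
    ring

theorem stmt17 (d s : ℕ) (hd : 1 < d) (hs : 1 ≤ s)
    (S : Matrix (Fin s) (Fin s) ℝ) (hSd : S ^ d = 0) (hSd1 : S ^ (d - 1) ≠ 0) :
    (∀ T T' : DE s, formDE (bkDE S T T' + ATDE S T T') T = 0) ∧
    IsLinearMap ℝ (fun T : DE s => ATDE S T) ∧
    (∀ T : DE s, ∃ A : DE s → DE s, IsSkewDerivDE S A ∧
      ∀ T' : DE s, formDE (bkDE S T T' + A T') T = 0) := by
  refine ⟨part1 S, part2 S, fun T => ⟨ATDE S T, ⟨blin S T, derivAT S T, skew S T⟩, part1 S T⟩⟩
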